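/- In the resonant case ω = Ω, with Φ⁰_{j,1} = (Φ_{j,1} + Φ_{j+1,−1})/√2 and Φ⁰_{j+1,−1} = (Φ_{j,1} − Φ_{j+1,−1})/√2, the matrix element ⟨Φ⁰_{j,1}, (X ⊗ 1) Φ⁰_{j+1,1}⟩ = (1/2)(√((j+1)/2) + √((j+2)/2)), which is nonzero for every j ∈ ℕ. -/

import Mathlib

open scoped InnerProductSpace

/-- In the resonant case `ω = Ω`, with the rotated eigenbasis
`Φ⁰_{j,1} = (Φ_{j,1} + Φ_{j+1,−1})/√2`, the matrix element of `X ⊗ 1` between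
`Φ⁰_{j,1}` and `Φ⁰_{j+1,1}` equals `(1/2)(√((j+1)/2) + √((j+2)/2)) ≠ 0`. -/
theorem rabi_resonant_coupling_plus_states
    {L : Type*} [NormedAddCommGroup L] [InnerProductSpace ℂ L]
    (φ : ℕ → L) (hortho : Orthonormal ℂ φ)
    (X : L →ₗ[ℂ] L)
    (hX : ∀ j : ℕ, X (φ j) =
      ((Real.sqrt ((j : ℝ) / 2) : ℝ) : ℂ) • φ (j - 1) +
      ((Real.sqrt (((j : ℝ) + 1) / 2) : ℝ) : ℂ) • φ (j + 1))
    (Φ : ℕ → ℝ → WithLp 2 (L × L))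
    (hΦ1 : ∀ j, Φ j 1 = (WithLp.equiv 2 (L × L)).symm (φ j, 0))
    (hΦm : ∀ j, Φ j (-1) = (WithLp.equiv 2 (L × L)).symm (0, φ j))
    (Φ0 : ℕ → ℝ → WithLp 2 (L × L))
    (hΦ0 : ∀ j, Φ0 j 1 = ((Real.sqrt 2)⁻¹ : ℂ) • (Φ j 1 + Φ (j + 1) (-1)))
    (Xone : WithLp 2 (L × L) →ₗ[ℂ] WithLp 2 (L × L))
    (hXone : ∀ ψ : WithLp 2 (L × L),
      Xone ψ = (WithLp.equiv 2 (L × L)).symm (X ψ.fst, X ψ.snd))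
    (j : ℕ) :
    ⟪Φ0 j 1, Xone (Φ0 (j + 1) 1)⟫_ℂ =
      (((1 / 2 * (Real.sqrt (((j : ℝ) + 1) / 2) + Real.sqrt (((j : ℝ) + 2) / 2))) : ℝ) : ℂ) ∧
    ⟪Φ0 j 1, Xone (Φ0 (j + 1) 1)⟫_ℂ ≠ 0 := by
  have hij : ∀ i k : ℕ, ⟪φ i, φ k⟫_ℂ = if i = k then 1 else 0 :=
    orthonormal_iff_ite.mp hortho
  have key : ⟪Φ0 j 1, Xone (Φ0 (j + 1) 1)⟫_ℂ =
      (((1 / 2 * (Real.sqrt (((j : ℝ) + 1) / 2) + Real.sqrt (((j : ℝ) + 2) / 2))) : ℝ) : ℂ) := by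
    rw [hΦ0, hΦ0, map_smul, hXone, hΦ1, hΦ1, hΦm, hΦm]
    simp only [WithLp.prod_inner_apply, WithLp.equiv_symm_apply, WithLp.ofLp_toLp,
      WithLp.add_fst, WithLp.add_snd, WithLp.fst, WithLp.snd, WithLp.ofLp_add, Prod.fst_add, Prod.snd_add, Prod.smul_fst, Prod.smul_snd,
      WithLp.toLp_smul, inner_smul_left, inner_smul_right, inner_add_left, inner_add_right,
      Prod.mk_add_mk, map_add, map_smul, add_zero, zero_add, map_zero, smul_zero]
    rw [hX (j+1), hX (j+2)]
    push_cast
    simp only [inner_add_right, inner_smul_right, hij]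
    norm_num
    rw [if_neg (show ¬ j = j + 1 + 1 by omega), add_zero]
    have h2 : (((Real.sqrt 2 : ℝ) : ℂ))⁻¹ * (((Real.sqrt 2 : ℝ) : ℂ))⁻¹ = 1/2 := by
      rw [← mul_inv]
      norm_cast
      rw [Real.mul_self_sqrt (by norm_num : (0:ℝ) ≤ 2)]
      push_cast; norm_num
    rw [← mul_assoc, h2]
  refine ⟨key, key ▸ ?_⟩
  have h1 : 0 < Real.sqrt (((j : ℝ) + 1) / 2) := Real.sqrt_pos.2 (by positivity)
  have h2 : 0 ≤ Real.sqrt (((j : ℝ) + 2) / 2) := Real.sqrt_nonneg _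
  exact_mod_cast ne_of_gt (by positivity : (0:ℝ) < 1 / 2 * (Real.sqrt (((j : ℝ) + 1) / 2) + Real.sqrt (((j : ℝ) + 2) / 2)))
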